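/- Set ε = 1/8 and x0 = 1/8, and for each d ≥ 3 let σ = σ_d be the unique positive solution of x0²/(2σ²) = log( dσ/(√(2π) ε x0) ). Then there exists a three-layer ReLU network f_W with path-norm with bias PN_b(W) ≤ 1 such that | ∫_{ℝ^d} f_W(x) ρ_d(x) dx | ≥ 1/(513 d² + 512 d + 1), i.e. the three-layer IPM satisfies d_{F_{3L}}(μ_d,ν_d) ≥ 1/(513 d² + 512 d + 1). -/

import Mathlib

open MeasureTheory

noncomputable section

/-- The set `B = {-3/2, -1/2, 1/2, 3/2}` as a finset of reals. -/
def Bset : Finset ℝ := {-3/2, -1/2, 1/2, 3/2}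

/-- The signed Gaussian-mixture density `ρ_d`. -/
def rhoMix (d : ℕ) (σ : ℝ) (x : EuclideanSpace ℝ (Fin d)) : ℝ :=
  (2 / (4 * Real.sqrt (2 * Real.pi * σ ^ 2)) ^ d) *
    ∑ β ∈ Fintype.piFinset (fun _ : Fin d => Bset),
      (∏ i, Real.sign (β i)) * Real.exp (-(∑ i, (x i - β i) ^ 2) / (2 * σ ^ 2))

/-- `ReLU(t) = max(t, 0)`. -/
def relu (t : ℝ) : ℝ := max t 0

/-- A three-layer ReLU neural network with weights
`W = ((θ_j, b_j)_j, (W_{i,j})_{i=1..m2, j=0..m1}, (w_i)_{i=0..m2})`. -/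
structure ThreeLayerNet (d : ℕ) where
  m1 : ℕ
  m2 : ℕ
  θ : Fin m1 → EuclideanSpace ℝ (Fin d)
  b : Fin m1 → ℝ
  W : Fin m2 → Fin m1 → ℝ
  W0 : Fin m2 → ℝ
  w : Fin m2 → ℝ
  w0 : ℝ

/-- The function computed by a three-layer ReLU network. -/
def ThreeLayerNet.eval {d : ℕ} (N : ThreeLayerNet d) (x : EuclideanSpace ℝ (Fin d)) : ℝ :=
  ∑ i, N.w i * relu (∑ j, N.W i j * relu ((inner ℝ (N.θ j) x : ℝ) - N.b j) + N.W0 i) + N.w0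

/-- The path-norm with bias of a three-layer ReLU network. -/
def ThreeLayerNet.pnB {d : ℕ} (N : ThreeLayerNet d) : ℝ :=
  ∑ i, |N.w i| *
    (∑ j, |N.W i j| * Real.sqrt (‖N.θ j‖ ^ 2 + (N.b j) ^ 2) + |N.W0 i|) + |N.w0|


open MeasureTheory Real Filter Set

section Aux
variable {σ : ℝ}



def hfun (t : ℝ) : ℝ := (4/3) * (relu (t + 3/8) - relu (t - 3/8))

def ccoef (a : ℝ) (k : ℕ) : ℝ := if k = 0 then -(2*a) else (-1)^(k+1) * (4*a)

def Ffun (a : ℝ) (d : ℕ) (s : ℝ) : ℝ := a + ∑ k ∈ Finset.range d, ccoef a k * relu (s - k)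

lemma relu_of_nonneg {t : ℝ} (h : 0 ≤ t) : relu t = t := max_eq_left h
lemma relu_of_nonpos {t : ℝ} (h : t ≤ 0) : relu t = 0 := max_eq_right h

lemma sum_ccoef (a : ℝ) (k : ℕ) (s : ℝ) :
    a + ∑ j ∈ Finset.range (k+1), ccoef a j * (s - j) = a * (-1)^k * (1 - 2*(s-k)) := by
  induction k with
  | zero => simp [ccoef]; ring
  | succ n ih =>
      rw [Finset.sum_range_succ, ← add_assoc, ih, ccoef]
      simp only [Nat.succ_ne_zero, if_false]
      push_cast
      ring

lemma Ffun_eq (a : ℝ) (d : ℕ) (k : ℕ) (hk : k < d) (s : ℝ) (h1 : (k:ℝ) ≤ s)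
    (h2 : s ≤ (k:ℝ) + 1) : Ffun a d s = a * (-1)^k * (1 - 2*(s-k)) := by
  have hsplit : (∑ j ∈ Finset.Ico 0 (k+1), ccoef a j * relu (s - j))
      + ∑ j ∈ Finset.Ico (k+1) d, ccoef a j * relu (s - j)
      = ∑ j ∈ Finset.Ico 0 d, ccoef a j * relu (s - j) :=
    Finset.sum_Ico_consecutive _ (Nat.zero_le _) hk
  have h3 : ∑ j ∈ Finset.Ico (k+1) d, ccoef a j * relu (s - j) = 0 := by
    apply Finset.sum_eq_zero
    intro j hj
    have : s - j ≤ 0 := by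
      have := (Finset.mem_Ico.1 hj).1
      have : ((k:ℝ))+1 ≤ j := by exact_mod_cast this
      linarith
    rw [relu_of_nonpos this, mul_zero]
  have h4 : ∀ j ∈ Finset.Ico 0 (k+1), ccoef a j * relu (s - j) = ccoef a j * (s - j) := by
    intro j hj
    have hj' : j ≤ k := Nat.lt_succ_iff.1 (Finset.mem_Ico.1 hj).2
    have : (0:ℝ) ≤ s - j := by
      have : (j:ℝ) ≤ k := by exact_mod_cast hj'
      linarith
    rw [relu_of_nonneg this]
  rw [Ffun, Finset.range_eq_Ico, ← hsplit, h3, add_zero,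
    Finset.sum_congr rfl h4, ← Finset.range_eq_Ico, sum_ccoef]

lemma Ffun_int (a : ℝ) (d : ℕ) (n : ℕ) (hn : n ≤ d) (hd : 1 ≤ d) :
    Ffun a d n = a * (-1)^n := by
  rcases lt_or_eq_of_le hn with h | h
  · rw [Ffun_eq a d n h n le_rfl (by linarith)]; ring_nf
  · subst h
    have hk : n - 1 < n := by omega
    have hc : ((n - 1 : ℕ) : ℝ) = (n:ℝ) - 1 := by
      push_cast [Nat.cast_sub hd]; ring
    rw [Ffun_eq a n (n-1) hk n (by rw [hc]; linarith) (by rw [hc]; linarith)]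
    have hn1 : n = (n-1)+1 := by omega
    have hpow : (-1 : ℝ)^n = (-1)^(n-1) * (-1) := by
      nth_rewrite 1 [hn1]; rw [pow_succ]
    rw [hpow, hc]; ring

lemma Ffun_abs_le (a : ℝ) (ha : 0 ≤ a) (d : ℕ) (hd : 1 ≤ d) (s : ℝ) (h0 : 0 ≤ s)
    (h1 : s ≤ d) : |Ffun a d s| ≤ a := by
  set k := min ⌊s⌋₊ (d-1) with hk
  have hkd : k < d := by
    have : k ≤ d - 1 := min_le_right _ _
    omega
  have hks : (k:ℝ) ≤ s := by
    have h1' : (⌊s⌋₊ : ℝ) ≤ s := Nat.floor_le h0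
    have : (k:ℝ) ≤ (⌊s⌋₊:ℝ) := by exact_mod_cast min_le_left _ _
    linarith
  have hsk : s ≤ (k:ℝ) + 1 := by
    rcases le_or_gt ⌊s⌋₊ (d-1) with h | h
    · have : k = ⌊s⌋₊ := min_eq_left h
      rw [this]
      exact (Nat.lt_floor_add_one s).le
    · have hkk : k = d - 1 := min_eq_right h.le
      have hc : ((d - 1 : ℕ) : ℝ) = (d:ℝ) - 1 := by
        push_cast [Nat.cast_sub hd]; ring
      rw [hkk, hc]; linarith
  rw [Ffun_eq a d k hkd s hks hsk]
  rw [abs_mul, abs_mul, abs_pow, abs_neg, abs_one, one_pow, mul_one, abs_of_nonneg ha]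
  have : |1 - 2*(s - k)| ≤ 1 := by
    rw [abs_le]; constructor <;> linarith
  calc a * |1 - 2*(s-k)| ≤ a * 1 := by
        exact mul_le_mul_of_nonneg_left this ha
    _ = a := mul_one a



variable {σ : ℝ}

lemma deriv_gauss (hσ : 0 < σ) (t : ℝ) :
    HasDerivAt (fun t : ℝ => Real.exp (-t^2/(2*σ^2)))
      (Real.exp (-t^2/(2*σ^2)) * (-t/σ^2)) t := by
  have h0 : HasDerivAt (fun t : ℝ => -t^2/(2*σ^2)) (-t/σ^2) t := by
    have h : HasDerivAt (fun t : ℝ => t^2) (2*t) t := by simpa using hasDerivAt_pow 2 t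
    have := (h.neg).div_const (2*σ^2)
    convert! this using 1
    field_simp
  exact h0.exp

lemma tendsto_gauss_atTop (hσ : 0 < σ) :
    Tendsto (fun t : ℝ => Real.exp (-t^2/(2*σ^2))) atTop (nhds 0) := by
  apply Real.tendsto_exp_atBot.comp
  have h1 : Tendsto (fun t : ℝ => t^2) atTop atTop := by
    simpa using tendsto_pow_atTop (two_ne_zero)
  have h2 : Tendsto (fun t : ℝ => -t^2) atTop atBot := tendsto_neg_atBot_iff.mpr h1
  have := h2.atBot_div_const (by positivity : (0:ℝ) < 2*σ^2)
  exact this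

lemma tendsto_gauss_atBot (hσ : 0 < σ) :
    Tendsto (fun t : ℝ => Real.exp (-t^2/(2*σ^2))) atBot (nhds 0) := by
  have := (tendsto_gauss_atTop hσ).comp tendsto_neg_atBot_atTop
  simpa [Function.comp_def] using this

lemma integrable_gauss (hσ : 0 < σ) (m : ℝ) :
    Integrable (fun t : ℝ => Real.exp (-(t-m)^2/(2*σ^2))) := by
  have hb : (0:ℝ) < 1/(2*σ^2) := by positivity
  have h := (integrable_exp_neg_mul_sq hb).comp_sub_right m
  convert h using 2 with t
  field_simp

lemma integral_gauss (hσ : 0 < σ) (m : ℝ) :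
    ∫ t : ℝ, Real.exp (-(t-m)^2/(2*σ^2)) = Real.sqrt (2*Real.pi*σ^2) := by
  have hb : (0:ℝ) < 1/(2*σ^2) := by positivity
  have h1 : (fun t : ℝ => Real.exp (-(t-m)^2/(2*σ^2)))
      = fun t : ℝ => (fun u : ℝ => Real.exp (-(1/(2*σ^2)) * u^2)) (t - m) := by
    funext t; congr 1; field_simp
  rw [h1, integral_sub_right_eq_self (fun u : ℝ => Real.exp (-(1/(2*σ^2)) * u^2)) m,
    integral_gaussian]
  congr 1
  field_simp

lemma integrable_mul_gauss (hσ : 0 < σ) :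
    Integrable (fun t : ℝ => t * Real.exp (-t^2/(2*σ^2))) := by
  have hb : (0:ℝ) < 1/(2*σ^2) := by positivity
  have h := integrable_mul_exp_neg_mul_sq hb
  convert h using 2 with t
  congr 1
  field_simp

lemma gauss_tail_Iic (hσ : 0 < σ) {c : ℝ} (hc : 0 < c) :
    ∫ t in Iic (-c), Real.exp (-t^2/(2*σ^2)) ≤ σ^2/c * Real.exp (-c^2/(2*σ^2)) := by
  have key : ∫ t in Iic (-c), (-t) * Real.exp (-t^2/(2*σ^2))
      = σ^2 * Real.exp (-(-c)^2/(2*σ^2)) - 0 := by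
    apply integral_Iic_of_hasDerivAt_of_tendsto'
      (f := fun t => σ^2 * Real.exp (-t^2/(2*σ^2)))
    · intro x _
      have := (deriv_gauss hσ x).const_mul (σ^2)
      convert! this using 1
      field_simp
    · exact ((integrable_mul_gauss hσ).neg.congr (by
        filter_upwards with t
        simp only [Pi.neg_apply]
        ring)).integrableOn
    · have := (tendsto_gauss_atBot hσ).const_mul (σ^2)
      simpa using this
  have hmono : ∫ t in Iic (-c), Real.exp (-t^2/(2*σ^2))
      ≤ ∫ t in Iic (-c), (1/c) * ((-t) * Real.exp (-t^2/(2*σ^2))) := by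
    apply setIntegral_mono_on
    · exact (integrable_gauss hσ 0).integrableOn.congr_fun
        (fun t _ => by norm_num) measurableSet_Iic
    · exact (((integrable_mul_gauss hσ).neg.congr (by
        filter_upwards with t
        simp only [Pi.neg_apply]
        ring)).const_mul (1/c)).integrableOn
    · exact measurableSet_Iic
    · intro t ht
      have ht' : t ≤ -c := ht
      have h1 : (1:ℝ) ≤ (1/c) * (-t) := by
        rw [one_div, inv_mul_eq_div, le_div_iff₀ hc]
        linarith
      calc Real.exp (-t^2/(2*σ^2)) = 1 * Real.exp (-t^2/(2*σ^2)) := (one_mul _).symm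
        _ ≤ (1/c * -t) * Real.exp (-t^2/(2*σ^2)) :=
            mul_le_mul_of_nonneg_right h1 (Real.exp_nonneg _)
        _ = 1/c * (-t * Real.exp (-t^2/(2*σ^2))) := by ring
  rw [integral_const_mul] at hmono
  rw [key] at hmono
  calc ∫ t in Iic (-c), Real.exp (-t^2/(2*σ^2))
      ≤ 1/c * (σ^2 * Real.exp (-(-c)^2/(2*σ^2)) - 0) := hmono
    _ = σ^2/c * Real.exp (-c^2/(2*σ^2)) := by rw [neg_sq]; ring

lemma gauss_tail_Ioi (hσ : 0 < σ) {c : ℝ} (hc : 0 < c) :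
    ∫ t in Ioi c, Real.exp (-t^2/(2*σ^2)) ≤ σ^2/c * Real.exp (-c^2/(2*σ^2)) := by
  have key : ∫ t in Ioi c, t * Real.exp (-t^2/(2*σ^2))
      = 0 - (-(σ^2) * Real.exp (-c^2/(2*σ^2))) := by
    apply integral_Ioi_of_hasDerivAt_of_tendsto'
      (f := fun t => -(σ^2) * Real.exp (-t^2/(2*σ^2)))
    · intro x _
      have := (deriv_gauss hσ x).const_mul (-(σ^2))
      convert! this using 1
      field_simp
    · exact (integrable_mul_gauss hσ).integrableOn
    · have := (tendsto_gauss_atTop hσ).const_mul (-(σ^2))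
      simpa using this
  have hmono : ∫ t in Ioi c, Real.exp (-t^2/(2*σ^2))
      ≤ ∫ t in Ioi c, (1/c) * (t * Real.exp (-t^2/(2*σ^2))) := by
    apply setIntegral_mono_on
    · exact (integrable_gauss hσ 0).integrableOn.congr_fun
        (fun t _ => by norm_num) measurableSet_Ioi
    · exact ((integrable_mul_gauss hσ).const_mul (1/c)).integrableOn
    · exact measurableSet_Ioi
    · intro t ht
      have ht' : c < t := ht
      have h1 : (1:ℝ) ≤ (1/c) * t := by
        rw [one_div, inv_mul_eq_div, le_div_iff₀ hc]
        linarith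
      calc Real.exp (-t^2/(2*σ^2)) = 1 * Real.exp (-t^2/(2*σ^2)) := (one_mul _).symm
        _ ≤ (1/c * t) * Real.exp (-t^2/(2*σ^2)) :=
            mul_le_mul_of_nonneg_right h1 (Real.exp_nonneg _)
        _ = 1/c * (t * Real.exp (-t^2/(2*σ^2))) := by ring
  rw [integral_const_mul, key] at hmono
  calc ∫ t in Ioi c, Real.exp (-t^2/(2*σ^2))
      ≤ 1/c * (0 - (-(σ^2) * Real.exp (-c^2/(2*σ^2)))) := hmono
    _ = σ^2/c * Real.exp (-c^2/(2*σ^2)) := by ring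



lemma shift_Iic (g : ℝ → ℝ) (y b : ℝ) :
    ∫ t in Iic y, g (t - b) = ∫ t in Iic (y - b), g t := by
  rw [← integral_indicator measurableSet_Iic, ← integral_indicator measurableSet_Iic]
  have : (fun t => Set.indicator (Iic y) (fun t => g (t - b)) t)
      = fun t => (Set.indicator (Iic (y - b)) g) (t - b) := by
    funext t
    simp only [Set.indicator_apply, mem_Iic]
    by_cases h : t ≤ y
    · rw [if_pos h, if_pos (by linarith)]
    · rw [if_neg h, if_neg (by intro h'; exact h (by linarith))]
  rw [this, integral_sub_right_eq_self (Set.indicator (Iic (y - b)) g) b]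

lemma shift_Ioi (g : ℝ → ℝ) (y b : ℝ) :
    ∫ t in Ioi y, g (t - b) = ∫ t in Ioi (y - b), g t := by
  rw [← integral_indicator measurableSet_Ioi, ← integral_indicator measurableSet_Ioi]
  have : (fun t => Set.indicator (Ioi y) (fun t => g (t - b)) t)
      = fun t => (Set.indicator (Ioi (y - b)) g) (t - b) := by
    funext t
    simp only [Set.indicator_apply, mem_Ioi]
    by_cases h : y < t
    · rw [if_pos h, if_pos (by linarith)]
    · rw [if_neg h, if_neg (by intro h'; exact h (by linarith))]
  rw [this, integral_sub_right_eq_self (Set.indicator (Ioi (y - b)) g) b]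

lemma bad_right (hσ : 0 < σ) {b : ℝ} (hb : 1/2 ≤ b) :
    ∫ t in Iio (3/8 : ℝ), Real.exp (-(t-b)^2/(2*σ^2))
      ≤ 8*σ^2 * Real.exp (-(1/8:ℝ)^2/(2*σ^2)) := by
  rw [setIntegral_congr_set Iio_ae_eq_Iic]
  rw [show (fun t : ℝ => Real.exp (-(t-b)^2/(2*σ^2)))
      = fun t : ℝ => (fun u : ℝ => Real.exp (-u^2/(2*σ^2))) (t - b) from rfl]
  rw [shift_Iic (fun u : ℝ => Real.exp (-u^2/(2*σ^2))) (3/8) b]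
  have hsub : Iic ((3:ℝ)/8 - b) ⊆ Iic (-(1/8:ℝ)) := Iic_subset_Iic.mpr (by linarith)
  have hmono : ∫ t in Iic ((3:ℝ)/8 - b), Real.exp (-t^2/(2*σ^2))
      ≤ ∫ t in Iic (-(1/8:ℝ)), Real.exp (-t^2/(2*σ^2)) := by
    apply setIntegral_mono_set
    · exact ((integrable_gauss hσ 0).congr (by
        filter_upwards with t
        norm_num)).integrableOn
    · filter_upwards with t using Real.exp_nonneg _
    · exact HasSubset.Subset.eventuallyLE hsub
  calc _ ≤ ∫ t in Iic (-(1/8:ℝ)), Real.exp (-t^2/(2*σ^2)) := hmono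
    _ ≤ σ^2/(1/8) * Real.exp (-(1/8:ℝ)^2/(2*σ^2)) := gauss_tail_Iic hσ (by norm_num)
    _ = 8*σ^2 * Real.exp (-(1/8:ℝ)^2/(2*σ^2)) := by ring

lemma bad_left (hσ : 0 < σ) {b : ℝ} (hb : b ≤ -(1/2)) :
    ∫ t in Ioi (-(3/8) : ℝ), Real.exp (-(t-b)^2/(2*σ^2))
      ≤ 8*σ^2 * Real.exp (-(1/8:ℝ)^2/(2*σ^2)) := by
  rw [show (fun t : ℝ => Real.exp (-(t-b)^2/(2*σ^2)))
      = fun t : ℝ => (fun u : ℝ => Real.exp (-u^2/(2*σ^2))) (t - b) from rfl]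
  rw [shift_Ioi (fun u : ℝ => Real.exp (-u^2/(2*σ^2))) (-(3/8)) b]
  have hsub : Ioi (-(3:ℝ)/8 - b) ⊆ Ioi ((1/8:ℝ)) := Ioi_subset_Ioi (by linarith)
  have hmono : ∫ t in Ioi (-(3:ℝ)/8 - b), Real.exp (-t^2/(2*σ^2))
      ≤ ∫ t in Ioi ((1/8:ℝ)), Real.exp (-t^2/(2*σ^2)) := by
    apply setIntegral_mono_set
    · exact ((integrable_gauss hσ 0).congr (by
        filter_upwards with t
        norm_num)).integrableOn
    · filter_upwards with t using Real.exp_nonneg _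
    · exact HasSubset.Subset.eventuallyLE hsub
  have h0 : (-(3/8) : ℝ) = -(3:ℝ)/8 := by norm_num
  rw [h0]
  calc _ ≤ ∫ t in Ioi ((1/8:ℝ)), Real.exp (-t^2/(2*σ^2)) := hmono
    _ ≤ σ^2/(1/8) * Real.exp (-(1/8:ℝ)^2/(2*σ^2)) := gauss_tail_Ioi hσ (by norm_num)
    _ = 8*σ^2 * Real.exp (-(1/8:ℝ)^2/(2*σ^2)) := by ring

def phi (σ b t : ℝ) : ℝ := Real.exp (-(t-b)^2/(2*σ^2))

def goodSet (b : ℝ) : Set ℝ := if 0 < b then Ici (3/8 : ℝ) else Iic (-(3/8) : ℝ)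

def nposs {d : ℕ} (β : Fin d → ℝ) : ℕ := (Finset.univ.filter fun i => 0 < β i).card

lemma nposs_le {d : ℕ} (β : Fin d → ℝ) : nposs β ≤ d := by
  calc nposs β ≤ Finset.univ.card := Finset.card_filter_le _ _
    _ = d := by simp

lemma measurableSet_goodSet (b : ℝ) : MeasurableSet (goodSet b) := by
  unfold goodSet
  split
  · exact measurableSet_Ici
  · exact measurableSet_Iic

lemma hfun_nonneg (t : ℝ) : 0 ≤ hfun t := by
  have h : max (t - 3/8) 0 ≤ max (t + 3/8) 0 := max_le_max (by linarith) le_rfl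
  unfold hfun relu
  linarith

lemma hfun_le_one (t : ℝ) : hfun t ≤ 1 := by
  unfold hfun relu
  rcases le_or_gt t (3/8) with h | h
  · have h1 : max (t - 3/8) 0 = 0 := max_eq_right (by linarith)
    have h2 : max (t + 3/8) 0 ≤ 3/4 := max_le (by linarith) (by norm_num)
    rw [h1]
    linarith
  · have h1 : max (t - 3/8) 0 = t - 3/8 := max_eq_left (by linarith)
    have h2 : max (t + 3/8) 0 = t + 3/8 := max_eq_left (by linarith)
    rw [h1, h2]
    linarith

lemma hfun_good_pos {t : ℝ} (h : t ∈ Ici (3/8:ℝ)) : hfun t = 1 := by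
  have ht : (3/8:ℝ) ≤ t := h
  unfold hfun
  rw [relu_of_nonneg (by linarith), relu_of_nonneg (by linarith)]
  ring

lemma hfun_good_neg {t : ℝ} (h : t ∈ Iic (-(3/8):ℝ)) : hfun t = 0 := by
  have ht : t ≤ -(3/8:ℝ) := h
  unfold hfun
  rw [relu_of_nonpos (by linarith), relu_of_nonpos (by linarith)]
  ring

lemma Bset_cases {b : ℝ} (hb : b ∈ Bset) :
    b = -3/2 ∨ b = -1/2 ∨ b = 1/2 ∨ b = 3/2 := by
  simpa [Bset, Finset.mem_insert, Finset.mem_singleton] using hb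

lemma Bset_pos {b : ℝ} (hb : b ∈ Bset) (h : 0 < b) : 1/2 ≤ b := by
  rcases Bset_cases hb with h1 | h1 | h1 | h1 <;> rw [h1] at h ⊢ <;> linarith

lemma Bset_neg {b : ℝ} (hb : b ∈ Bset) (h : ¬ 0 < b) : b ≤ -(1/2) := by
  rcases Bset_cases hb with h1 | h1 | h1 | h1 <;> rw [h1] at h ⊢ <;> linarith

lemma Bset_sign {b : ℝ} (hb : b ∈ Bset) :
    Real.sign b = if 0 < b then 1 else -1 := by
  by_cases h : 0 < b
  · rw [if_pos h, Real.sign_of_pos h]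
  · rw [if_neg h, Real.sign_of_neg (by have := Bset_neg hb h; linarith)]

lemma Bset_card : Bset.card = 4 := by
  rw [Bset]
  rw [Finset.card_insert_of_notMem (by norm_num),
    Finset.card_insert_of_notMem (by norm_num),
    Finset.card_insert_of_notMem (by norm_num), Finset.card_singleton]

lemma integral_phi (hσ : 0 < σ) (m : ℝ) :
    ∫ t : ℝ, phi σ m t = Real.sqrt (2*Real.pi*σ^2) := integral_gauss hσ m

lemma integrable_phi (hσ : 0 < σ) (m : ℝ) : Integrable (phi σ m) := integrable_gauss hσ m

lemma good_mass (hσ : 0 < σ) {d : ℕ} (hd : 1 ≤ d)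
    (hQ : 8*σ^2 * Real.exp (-(1/8:ℝ)^2/(2*σ^2)) ≤ Real.sqrt (2*Real.pi*σ^2) / (8*d))
    {b : ℝ} (hb : b ∈ Bset) :
    Real.sqrt (2*Real.pi*σ^2) * (1 - 1/(8*d)) ≤ ∫ t in goodSet b, phi σ b t := by
  have hsplit : (∫ t in goodSet b, phi σ b t) + ∫ t in (goodSet b)ᶜ, phi σ b t
      = Real.sqrt (2*Real.pi*σ^2) := by
    rw [integral_add_compl (measurableSet_goodSet b) (integrable_phi hσ b)]
    exact integral_phi hσ b
  have hbad : ∫ t in (goodSet b)ᶜ, phi σ b t ≤ Real.sqrt (2*Real.pi*σ^2) / (8*d) := by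
    refine le_trans ?_ hQ
    by_cases h : 0 < b
    · rw [goodSet, if_pos h, compl_Ici]
      exact bad_right hσ (Bset_pos hb h)
    · rw [goodSet, if_neg h, compl_Iic]
      exact bad_left hσ (Bset_neg hb h)
  have hd1 : (1:ℝ) ≤ d := by exact_mod_cast hd
  have : Real.sqrt (2*Real.pi*σ^2) * (1 - 1/(8*d))
      = Real.sqrt (2*Real.pi*σ^2) - Real.sqrt (2*Real.pi*σ^2) / (8*d) := by
    field_simp
  rw [this]
  linarith

lemma continuous_Fs (a : ℝ) (d : ℕ) :
    Continuous (fun y : Fin d → ℝ => Ffun a d (∑ i, hfun (y i))) := by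
  have hrelu : Continuous relu := continuous_id.max continuous_const
  have hh : Continuous hfun :=
    continuous_const.mul ((hrelu.comp (continuous_id.add continuous_const)).sub
      (hrelu.comp (continuous_id.sub continuous_const)))
  have hs : Continuous (fun y : Fin d → ℝ => ∑ i, hfun (y i)) :=
    continuous_finset_sum _ (fun i _ => hh.comp (continuous_apply i))
  have hF : Continuous (Ffun a d) := by
    unfold Ffun
    exact continuous_const.add (continuous_finset_sum _
      (fun k _ => continuous_const.mul (hrelu.comp (continuous_id.sub continuous_const))))
  exact hF.comp hs

lemma sfun_nonneg {d : ℕ} (y : Fin d → ℝ) : 0 ≤ ∑ i, hfun (y i) :=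
  Finset.sum_nonneg (fun i _ => hfun_nonneg (y i))

lemma sfun_le {d : ℕ} (y : Fin d → ℝ) : ∑ i, hfun (y i) ≤ d := by
  calc ∑ i, hfun (y i) ≤ ∑ _i : Fin d, (1:ℝ) :=
        Finset.sum_le_sum (fun i _ => hfun_le_one (y i))
    _ = d := by simp

lemma integrable_gpi (hσ : 0 < σ) {d : ℕ} (β : Fin d → ℝ) :
    Integrable (fun y : Fin d → ℝ => ∏ i, phi σ (β i) (y i)) := by
  have : ∀ i : Fin d, Integrable (phi σ (β i)) := fun i => integrable_phi hσ (β i)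
  exact Integrable.fintype_prod this

lemma integrable_Fgpi (hσ : 0 < σ) {d : ℕ} (hd : 1 ≤ d) {a : ℝ} (ha : 0 ≤ a)
    (β : Fin d → ℝ) :
    Integrable (fun y : Fin d → ℝ =>
      Ffun a d (∑ i, hfun (y i)) * ∏ i, phi σ (β i) (y i)) := by
  apply (integrable_gpi hσ β).bdd_mul (continuous_Fs a d).aestronglyMeasurable
  exact Filter.Eventually.of_forall (fun y => by
    rw [Real.norm_eq_abs]
    exact Ffun_abs_le a ha d hd _ (sfun_nonneg y) (sfun_le y))

lemma Jbound (hσ : 0 < σ) {d : ℕ} (hd : 1 ≤ d) {a : ℝ} (ha : 0 ≤ a)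
    (hQ : 8*σ^2 * Real.exp (-(1/8:ℝ)^2/(2*σ^2)) ≤ Real.sqrt (2*Real.pi*σ^2) / (8*d))
    (β : Fin d → ℝ) (hβ : ∀ i, β i ∈ Bset) :
    |(∫ y : Fin d → ℝ, Ffun a d (∑ i, hfun (y i)) * ∏ i, phi σ (β i) (y i))
      - a * (-1)^(nposs β) * Real.sqrt (2*Real.pi*σ^2)^d|
      ≤ a/4 * Real.sqrt (2*Real.pi*σ^2)^d := by
  classical
  set Z := Real.sqrt (2*Real.pi*σ^2) with hZdef
  have hZ : 0 < Z := Real.sqrt_pos.mpr (by positivity)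
  set F : (Fin d → ℝ) → ℝ := fun y => Ffun a d (∑ i, hfun (y i)) with hFdef
  set gpi : (Fin d → ℝ) → ℝ := fun y => ∏ i, phi σ (β i) (y i) with hgdef
  set v : ℝ := a * (-1)^(nposs β) with hvdef
  have hFb : ∀ y, |F y| ≤ a := fun y =>
    Ffun_abs_le a ha d hd _ (sfun_nonneg y) (sfun_le y)
  have hgnn : ∀ y, 0 ≤ gpi y := fun y =>
    Finset.prod_nonneg (fun i _ => Real.exp_nonneg _)
  have hint_gpi : Integrable gpi := integrable_gpi hσ β
  have hint_F : Integrable (fun y => F y * gpi y) := integrable_Fgpi hσ hd ha β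
  set ψ : Fin d → ℝ → ℝ := fun i => Set.indicator (goodSet (β i)) (phi σ (β i)) with hψdef
  have hint_ψ : ∀ i, Integrable (ψ i) := fun i =>
    (integrable_phi hσ (β i)).indicator (measurableSet_goodSet _)
  have hint_ψprod : Integrable (fun y : Fin d → ℝ => ∏ i, ψ i (y i)) :=
    Integrable.fintype_prod hint_ψ
  have hgZ : ∫ y : Fin d → ℝ, gpi y = Z^d := by
    rw [hgdef]
    rw [MeasureTheory.integral_fintype_prod_volume_eq_prod (fun i => phi σ (β i))]
    rw [Finset.prod_congr rfl (fun i _ => integral_phi hσ (β i))]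
    simp [Finset.prod_const, hZdef]
  have hψval : ∫ y : Fin d → ℝ, ∏ i, ψ i (y i)
      = ∏ i, ∫ t in goodSet (β i), phi σ (β i) t := by
    rw [MeasureTheory.integral_fintype_prod_volume_eq_prod ψ]
    exact Finset.prod_congr rfl (fun i _ => integral_indicator (measurableSet_goodSet _))
  have hA : ∀ i, Z * (1 - 1/(8*d)) ≤ ∫ t in goodSet (β i), phi σ (β i) t :=
    fun i => good_mass hσ hd hQ (hβ i)
  have hd0 : (0:ℝ) < d := by exact_mod_cast Nat.lt_of_lt_of_le Nat.zero_lt_one hd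
  have hfac : (0:ℝ) ≤ 1 - 1/(8*d) := by
    have : 1/(8*(d:ℝ)) ≤ 1/8 := by
      apply div_le_div_of_nonneg_left (by norm_num) (by norm_num)
      · have : (1:ℝ) ≤ d := by exact_mod_cast hd
        linarith
    linarith
  have hAlow : Z^d * (1 - 1/8 : ℝ) ≤ ∫ y : Fin d → ℝ, ∏ i, ψ i (y i) := by
    rw [hψval]
    have h1 : (Z * (1 - 1/(8*d)))^d ≤ ∏ i, ∫ t in goodSet (β i), phi σ (β i) t := by
      have := Finset.prod_le_prod (s := Finset.univ)
        (f := fun _ : Fin d => Z * (1 - 1/(8*d)))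
        (g := fun i => ∫ t in goodSet (β i), phi σ (β i) t)
        (fun i _ => mul_nonneg hZ.le hfac) (fun i _ => hA i)
      simpa [Finset.prod_const] using this
    have h2 : (1 - 1/8 : ℝ) ≤ (1 - 1/(8*d))^d := by
      have := one_add_mul_le_pow (a := -(1/(8*(d:ℝ)))) (by
        have : 0 ≤ 1/(8*(d:ℝ)) := by positivity
        linarith) d
      have he : (1:ℝ) + d * (-(1/(8*d))) = 1 - 1/8 := by
        field_simp
        ring
      rw [he] at this
      calc (1 - 1/8 : ℝ) ≤ (1 + -(1/(8*(d:ℝ))))^d := this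
        _ = (1 - 1/(8*(d:ℝ)))^d := by ring_nf
    calc Z^d * (1 - 1/8 : ℝ) ≤ Z^d * (1 - 1/(8*d))^d := by
          apply mul_le_mul_of_nonneg_left h2 (by positivity)
      _ = (Z * (1 - 1/(8*d)))^d := by rw [mul_pow]
      _ ≤ _ := h1
  have hpoint : ∀ y, |F y - v| * gpi y ≤ 2*a*(gpi y - ∏ i, ψ i (y i)) := by
    intro y
    by_cases hg : ∀ i, y i ∈ goodSet (β i)
    · have h2 : ∏ i, ψ i (y i) = gpi y :=
        Finset.prod_congr rfl (fun i _ => Set.indicator_of_mem (hg i) _)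
      have h3 : ∑ i, hfun (y i) = ((nposs β : ℕ) : ℝ) := by
        have hper : ∀ i, hfun (y i) = if 0 < β i then (1:ℝ) else 0 := by
          intro i
          have hgi := hg i
          by_cases hbi : 0 < β i
          · rw [if_pos hbi]
            rw [goodSet, if_pos hbi] at hgi
            exact hfun_good_pos hgi
          · rw [if_neg hbi]
            rw [goodSet, if_neg hbi] at hgi
            exact hfun_good_neg hgi
        rw [Finset.sum_congr rfl (fun i _ => hper i)]
        rw [Finset.sum_boole]
        rfl
      have h4 : F y = v := by
        rw [hFdef]
        simp only []
        rw [h3, Ffun_int a d (nposs β) (nposs_le β) hd, hvdef]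
      rw [h2, h4]
      simp
    · push_neg at hg
      obtain ⟨i0, hi0⟩ := hg
      have h6 : ∏ i, ψ i (y i) = 0 :=
        Finset.prod_eq_zero (Finset.mem_univ i0) (Set.indicator_of_notMem hi0 _)
      rw [h6, sub_zero]
      have hv : |v| = a := by
        rw [hvdef, abs_mul, abs_pow, abs_neg, abs_one, one_pow, mul_one, abs_of_nonneg ha]
      have h7 : |F y - v| ≤ 2*a := by
        have h8 : |F y - v| ≤ |F y| + |v| := by
          rw [sub_eq_add_neg]
          exact (abs_add_le _ _).trans (by rw [abs_neg])
        have := hFb y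
        rw [hv] at h8
        linarith
      exact mul_le_mul_of_nonneg_right h7 (hgnn y)
  have key1 : (∫ y : Fin d → ℝ, F y * gpi y) - v * Z^d
      = ∫ y : Fin d → ℝ, (F y - v) * gpi y := by
    have heq : (fun y : Fin d → ℝ => (F y - v) * gpi y)
        = fun y => F y * gpi y - v * gpi y := by
      funext y
      ring
    rw [heq, integral_sub hint_F (hint_gpi.const_mul v), integral_const_mul, hgZ]
  have key2 : |∫ y : Fin d → ℝ, (F y - v) * gpi y|
      ≤ 2*a*(Z^d - ∫ y : Fin d → ℝ, ∏ i, ψ i (y i)) := by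
    have habs : |∫ y : Fin d → ℝ, (F y - v) * gpi y|
        ≤ ∫ y : Fin d → ℝ, |(F y - v) * gpi y| := by
      have := norm_integral_le_integral_norm
        (μ := (volume : Measure (Fin d → ℝ))) (fun y : Fin d → ℝ => (F y - v) * gpi y)
      simp only [Real.norm_eq_abs] at this
      exact this
    refine habs.trans ?_
    have hmono : ∫ y : Fin d → ℝ, |(F y - v) * gpi y|
        ≤ ∫ y : Fin d → ℝ, 2*a*(gpi y - ∏ i, ψ i (y i)) := by
      apply integral_mono ((hint_F.sub (hint_gpi.const_mul v)).abs.congr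
        (Filter.Eventually.of_forall (fun y => by simp only [Pi.sub_apply]; congr 1; ring)))
        (((hint_gpi.sub hint_ψprod).const_mul (2*a)))
        (fun y => by
          rw [abs_mul, abs_of_nonneg (hgnn y)]
          exact hpoint y)
    refine hmono.trans ?_
    rw [integral_const_mul, integral_sub hint_gpi hint_ψprod, hgZ]
  have hbadmass : Z^d - (∫ y : Fin d → ℝ, ∏ i, ψ i (y i)) ≤ Z^d/8 := by
    have hZd : (0:ℝ) ≤ Z^d := by positivity
    nlinarith [hAlow]
  have hfinal : |(∫ y : Fin d → ℝ, F y * gpi y) - v * Z^d| ≤ a/4 * Z^d := by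
    rw [key1]
    refine key2.trans ?_
    have : 2*a*(Z^d - ∫ y : Fin d → ℝ, ∏ i, ψ i (y i)) ≤ 2*a*(Z^d/8) :=
      mul_le_mul_of_nonneg_left hbadmass (by linarith)
    calc 2*a*(Z^d - ∫ y : Fin d → ℝ, ∏ i, ψ i (y i)) ≤ 2*a*(Z^d/8) := this
      _ = a/4 * Z^d := by ring
  calc |(∫ y : Fin d → ℝ, F y * gpi y) - a * (-1)^(nposs β) * Z^d|
      = |(∫ y : Fin d → ℝ, F y * gpi y) - v * Z^d| := by rw [hvdef]
    _ ≤ a/4 * Z^d := hfinal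


def myNet (a : ℝ) (d : ℕ) : ThreeLayerNet d where
  m1 := d + d
  m2 := d
  θ := Fin.addCases (fun i : Fin d => EuclideanSpace.single i (1:ℝ))
       (fun i : Fin d => EuclideanSpace.single i (1:ℝ))
  b := Fin.addCases (fun _ => -(3/8 : ℝ)) (fun _ => (3/8 : ℝ))
  W := fun _ => Fin.addCases (fun _ => (4/3 : ℝ)) (fun _ => -(4/3 : ℝ))
  W0 := fun k => -((k : ℕ) : ℝ)
  w := fun k => ccoef a (k : ℕ)
  w0 := a

lemma myNet_eval (a : ℝ) (d : ℕ) (x : EuclideanSpace ℝ (Fin d)) :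
    (myNet a d).eval x = Ffun a d (∑ i, hfun (x i)) := by
  have h1 : ∀ k : Fin d, (∑ j : Fin (d+d), (myNet a d).W k j *
      relu ((inner ℝ ((myNet a d).θ j) x : ℝ) - (myNet a d).b j)) = ∑ i, hfun (x i) := by
    intro k
    rw [Fin.sum_univ_add]
    simp only [myNet, Fin.addCases_left, Fin.addCases_right,
      EuclideanSpace.inner_single_left, map_one, one_mul]
    rw [← Finset.sum_add_distrib]
    apply Finset.sum_congr rfl
    intro i _
    rw [hfun, sub_neg_eq_add]
    ring
  show (∑ k : Fin d, ccoef a (k:ℕ) * relu ((∑ j : Fin (d+d), (myNet a d).W k j *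
      relu ((inner ℝ ((myNet a d).θ j) x : ℝ) - (myNet a d).b j)) + -((k:ℕ):ℝ))) + a
    = Ffun a d (∑ i, hfun (x i))
  have hsum_eq : (∑ k : Fin d, ccoef a (k:ℕ) * relu ((∑ j : Fin (d+d), (myNet a d).W k j *
        relu ((inner ℝ ((myNet a d).θ j) x : ℝ) - (myNet a d).b j)) + -((k:ℕ):ℝ)))
      = ∑ k : Fin d, ccoef a (k:ℕ) * relu ((∑ i, hfun (x i)) - ((k:ℕ):ℝ)) :=
    Finset.sum_congr rfl (fun k _ => by rw [h1 k, ← sub_eq_add_neg])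
  rw [hsum_eq]
  rw [Fin.sum_univ_eq_sum_range (fun n : ℕ => ccoef a n * relu ((∑ i, hfun (x i)) - (n:ℝ))) d]
  rw [Ffun]
  ring

lemma sqrt_single_bound (d : ℕ) (i : Fin d) (c : ℝ) (hc : c^2 ≤ 1) :
    Real.sqrt (‖EuclideanSpace.single i (1:ℝ)‖^2 + c^2) ≤ 2 := by
  have h1 : ‖EuclideanSpace.single i (1:ℝ)‖ = 1 := by
    rw [EuclideanSpace.norm_single]
    simp
  rw [h1]
  have h2 : (1:ℝ)^2 + c^2 ≤ 4 := by nlinarith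
  calc Real.sqrt (1^2 + c^2) ≤ Real.sqrt 4 := Real.sqrt_le_sqrt h2
    _ = 2 := by
        rw [show (4:ℝ) = 2^2 by norm_num, Real.sqrt_sq (by norm_num)]

lemma myNet_pnB (a : ℝ) (ha : 0 ≤ a) (d : ℕ) :
    (myNet a d).pnB ≤ 26*a*d^2 + a := by
  show (∑ k : Fin d, |(myNet a d).w k| *
      ((∑ j : Fin (d+d), |(myNet a d).W k j| *
        Real.sqrt (‖(myNet a d).θ j‖^2 + ((myNet a d).b j)^2)) + |(myNet a d).W0 k|))
      + |(myNet a d).w0| ≤ 26*a*d^2 + a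
  have hw0 : |(myNet a d).w0| = a := by rw [show (myNet a d).w0 = a from rfl, abs_of_nonneg ha]
  have hterm : ∀ k : Fin d, |(myNet a d).w k| *
      ((∑ j : Fin (d+d), |(myNet a d).W k j| *
        Real.sqrt (‖(myNet a d).θ j‖^2 + ((myNet a d).b j)^2)) + |(myNet a d).W0 k|)
      ≤ 4*a*(16/3*d + d) := by
    intro k
    have hinner : (∑ j : Fin (d+d), |(myNet a d).W k j| *
        Real.sqrt (‖(myNet a d).θ j‖^2 + ((myNet a d).b j)^2)) ≤ 16/3*d := by
      rw [Fin.sum_univ_add]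
      simp only [myNet, Fin.addCases_left, Fin.addCases_right]
      have hb1 : ∀ i : Fin d, |(4/3 : ℝ)| *
          Real.sqrt (‖EuclideanSpace.single i (1:ℝ)‖^2 + (-(3/8 : ℝ))^2) ≤ 8/3 := by
        intro i
        have := sqrt_single_bound d i (-(3/8)) (by norm_num)
        rw [abs_of_nonneg (by norm_num : (0:ℝ) ≤ 4/3)]
        nlinarith [Real.sqrt_nonneg (‖EuclideanSpace.single i (1:ℝ)‖^2 + (-(3/8:ℝ))^2)]
      have hb2 : ∀ i : Fin d, |(-(4/3) : ℝ)| *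
          Real.sqrt (‖EuclideanSpace.single i (1:ℝ)‖^2 + ((3/8 : ℝ))^2) ≤ 8/3 := by
        intro i
        have := sqrt_single_bound d i ((3/8)) (by norm_num)
        rw [show |(-(4/3) : ℝ)| = 4/3 by norm_num]
        nlinarith [Real.sqrt_nonneg (‖EuclideanSpace.single i (1:ℝ)‖^2 + ((3/8:ℝ))^2)]
      have s1 : (∑ i : Fin d, |(4/3 : ℝ)| *
          Real.sqrt (‖EuclideanSpace.single i (1:ℝ)‖^2 + (-(3/8 : ℝ))^2)) ≤ 8/3*d := by
        calc _ ≤ ∑ _i : Fin d, (8/3 : ℝ) := Finset.sum_le_sum (fun i _ => hb1 i)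
          _ = 8/3*d := by simp [mul_comm]
      have s2 : (∑ i : Fin d, |(-(4/3) : ℝ)| *
          Real.sqrt (‖EuclideanSpace.single i (1:ℝ)‖^2 + ((3/8 : ℝ))^2)) ≤ 8/3*d := by
        calc _ ≤ ∑ _i : Fin d, (8/3 : ℝ) := Finset.sum_le_sum (fun i _ => hb2 i)
          _ = 8/3*d := by simp [mul_comm]
      linarith
    have hW0 : |(myNet a d).W0 k| ≤ (d:ℝ) := by
      rw [show (myNet a d).W0 k = -((k:ℕ):ℝ) from rfl, abs_neg, abs_of_nonneg (by positivity)]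
      exact_mod_cast (k.2.le)
    have hwk : |(myNet a d).w k| ≤ 4*a := by
      rw [show (myNet a d).w k = ccoef a (k:ℕ) from rfl, ccoef]
      split
      · rw [abs_neg, abs_of_nonneg (by linarith)]
        linarith
      · rw [abs_mul, abs_pow, abs_neg, abs_one, one_pow, one_mul,
          abs_of_nonneg (by linarith)]
    calc |(myNet a d).w k| * ((∑ j : Fin (d+d), |(myNet a d).W k j| *
        Real.sqrt (‖(myNet a d).θ j‖^2 + ((myNet a d).b j)^2)) + |(myNet a d).W0 k|)
        ≤ (4*a) * (16/3*d + d) := by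
          apply mul_le_mul hwk (by linarith) ?_ (by linarith)
          have h0 : (0:ℝ) ≤ ∑ j : Fin (d+d), |(myNet a d).W k j| *
              Real.sqrt (‖(myNet a d).θ j‖^2 + ((myNet a d).b j)^2) :=
            Finset.sum_nonneg (fun j _ => mul_nonneg (abs_nonneg _) (Real.sqrt_nonneg _))
          positivity
      _ = 4*a*(16/3*d + d) := by ring
  have hsum : (∑ k : Fin d, |(myNet a d).w k| *
      ((∑ j : Fin (d+d), |(myNet a d).W k j| *
        Real.sqrt (‖(myNet a d).θ j‖^2 + ((myNet a d).b j)^2)) + |(myNet a d).W0 k|))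
      ≤ d * (4*a*(16/3*d + d)) := by
    calc _ ≤ ∑ _k : Fin d, 4*a*(16/3*(d:ℝ) + d) := Finset.sum_le_sum (fun k _ => hterm k)
      _ = d * (4*a*(16/3*d + d)) := by simp [mul_comm]
  rw [hw0]
  have hd0 : (0:ℝ) ≤ d := Nat.cast_nonneg d
  nlinarith [hsum]

end Aux

/-- With `ε = 1/8`, `x0 = 1/8` and `σ_d` the unique positive solution of
`x0²/(2σ²) = log(dσ/(√(2π)εx0))`, the three-layer IPM between `μ_d` and `ν_d`
is at least `1/(513d² + 512d + 1)`. -/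
theorem d_F3L_final_bound (d : ℕ) (hd : 3 ≤ d) (σ : ℝ) (hσpos : 0 < σ)
    (hσ : (1/8 : ℝ) ^ 2 / (2 * σ ^ 2) =
      Real.log ((d : ℝ) * σ / (Real.sqrt (2 * Real.pi) * (1/8) * (1/8)))) :
    ∃ N : ThreeLayerNet d, N.pnB ≤ 1 ∧
      1 / (513 * (d : ℝ) ^ 2 + 512 * d + 1) ≤
        |∫ x : EuclideanSpace ℝ (Fin d), N.eval x * rhoMix d σ x| := by
  classical
  have hd1 : 1 ≤ d := by omega
  have hdR : (1:ℝ) ≤ (d:ℝ) := by exact_mod_cast hd1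
  have hdpos : (0:ℝ) < d := by linarith
  set a : ℝ := 1/(513*(d:ℝ)^2 + 512*(d:ℝ) + 1) with ha_def
  have hX : (0:ℝ) < 513*(d:ℝ)^2 + 512*(d:ℝ) + 1 := by positivity
  have ha : 0 < a := by positivity
  refine ⟨myNet a d, ?_, ?_⟩
  · -- path norm bound
    have h1 := myNet_pnB a ha.le d
    have h3 : (26*(d:ℝ)^2 + 1) ≤ 513*(d:ℝ)^2 + 512*(d:ℝ) + 1 := by nlinarith
    have h2 : 26*a*(d:ℝ)^2 + a ≤ 1 := by
      calc 26*a*(d:ℝ)^2 + a = a * (26*(d:ℝ)^2+1) := by ring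
        _ ≤ a * (513*(d:ℝ)^2+512*(d:ℝ)+1) := mul_le_mul_of_nonneg_left h3 ha.le
        _ = 1 := by rw [ha_def]; field_simp
    linarith
  · -- integral bound
    set Z := Real.sqrt (2*Real.pi*σ^2) with hZdef
    have h2pi : (0:ℝ) < 2*Real.pi*σ^2 := by positivity
    have hZpos : 0 < Z := Real.sqrt_pos.mpr h2pi
    have hsqrt2pi : (0:ℝ) < Real.sqrt (2*Real.pi) :=
      Real.sqrt_pos.mpr (by positivity)
    have hAexp : (0:ℝ) < (d:ℝ)*σ/(Real.sqrt (2*Real.pi) * (1/8) * (1/8)) := by positivity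
    have hexp : Real.exp (-(1/8:ℝ)^2/(2*σ^2))
        = (Real.sqrt (2*Real.pi) * (1/8) * (1/8)) / ((d:ℝ)*σ) := by
      have h1 : Real.exp ((1/8:ℝ)^2/(2*σ^2))
          = (d:ℝ)*σ/(Real.sqrt (2*Real.pi)*(1/8)*(1/8)) := by
        rw [hσ, Real.exp_log hAexp]
      rw [show (-(1/8:ℝ)^2/(2*σ^2)) = -((1/8:ℝ)^2/(2*σ^2)) by ring, Real.exp_neg, h1,
        inv_div]
    have hZeq : Z = σ * Real.sqrt (2*Real.pi) := by
      rw [hZdef, show 2*Real.pi*σ^2 = σ^2 * (2*Real.pi) by ring,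
        Real.sqrt_mul (sq_nonneg σ), Real.sqrt_sq hσpos.le]
    have hQ : 8*σ^2 * Real.exp (-(1/8:ℝ)^2/(2*σ^2)) ≤ Z/(8*(d:ℝ)) := by
      rw [hexp, hZeq]
      apply le_of_eq
      field_simp
    set BB := Fintype.piFinset (fun _ : Fin d => Bset) with hBB
    have hcard : BB.card = 4^d := by
      rw [hBB, Fintype.card_piFinset]
      simp [Bset_card]
    set C : ℝ := 2/(4*Z)^d with hC_def
    have hCpos : 0 < C := by positivity
    -- pointwise rewriting of the integrand
    have hexpprod : ∀ (β : Fin d → ℝ) (x : EuclideanSpace ℝ (Fin d)),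
        Real.exp (-(∑ i, (x i - β i)^2)/(2*σ^2)) = ∏ i, phi σ (β i) (x i) := by
      intro β x
      rw [show (-(∑ i, (x i - β i)^2)/(2*σ^2)) = ∑ i, (-(x i - β i)^2/(2*σ^2)) by
        rw [← Finset.sum_div, ← Finset.sum_neg_distrib]]
      rw [Real.exp_sum]
      rfl
    have heval : ∀ x : EuclideanSpace ℝ (Fin d), (myNet a d).eval x * rhoMix d σ x
        = ∑ β ∈ BB, (C * ∏ i, Real.sign (β i)) *
            (Ffun a d (∑ i, hfun (x i)) * ∏ i, phi σ (β i) (x i)) := by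
      intro x
      rw [myNet_eval, rhoMix, ← hZdef, ← hC_def, ← hBB, Finset.mul_sum, Finset.mul_sum]
      refine Finset.sum_congr rfl (fun β _ => ?_)
      rw [hexpprod β x]
      ring
    -- transfer to the product space
    have htrans : ∫ x : EuclideanSpace ℝ (Fin d), (myNet a d).eval x * rhoMix d σ x
        = ∑ β ∈ BB, (C * ∏ i, Real.sign (β i)) *
            ∫ y : Fin d → ℝ, Ffun a d (∑ i, hfun (y i)) * ∏ i, phi σ (β i) (y i) := by
      calc ∫ x : EuclideanSpace ℝ (Fin d), (myNet a d).eval x * rhoMix d σ x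
          = ∫ x : EuclideanSpace ℝ (Fin d), ∑ β ∈ BB, (C * ∏ i, Real.sign (β i)) *
              (Ffun a d (∑ i, hfun (x i)) * ∏ i, phi σ (β i) (x i)) :=
            integral_congr_ae (Filter.Eventually.of_forall heval)
        _ = ∫ y : Fin d → ℝ, ∑ β ∈ BB, (C * ∏ i, Real.sign (β i)) *
              (Ffun a d (∑ i, hfun (y i)) * ∏ i, phi σ (β i) (y i)) := by
            rw [← ((EuclideanSpace.volume_preserving_symm_measurableEquiv_toLp
              (Fin d)).symm).integral_comp']
            rfl
        _ = ∑ β ∈ BB, (C * ∏ i, Real.sign (β i)) *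
              ∫ y : Fin d → ℝ, Ffun a d (∑ i, hfun (y i)) * ∏ i, phi σ (β i) (y i) := by
            rw [integral_finset_sum BB (fun β _ =>
              ((integrable_Fgpi hσpos hd1 ha.le β).const_mul _))]
            exact Finset.sum_congr rfl (fun β _ => integral_const_mul _ _)
    -- per-β estimates
    have hterm : ∀ β ∈ BB,
        |(C * ∏ i, Real.sign (β i)) *
            (∫ y : Fin d → ℝ, Ffun a d (∑ i, hfun (y i)) * ∏ i, phi σ (β i) (y i))
          - C * a * (-1)^d * Z^d| ≤ C * (a/4 * Z^d) := by
      intro β hβ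
      have hm : ∀ i, β i ∈ Bset := by
        rw [hBB, Fintype.mem_piFinset] at hβ
        exact hβ
      have hχ : (∏ i, Real.sign (β i)) = (-1:ℝ)^(d - nposs β) := by
        rw [Finset.prod_congr rfl (fun i _ => Bset_sign (hm i))]
        rw [Finset.prod_ite (fun _ => (1:ℝ)) (fun _ => (-1:ℝ))]
        rw [Finset.prod_const, Finset.prod_const, one_pow, one_mul]
        congr 1
        have := Finset.card_filter_add_card_filter_not
          (s := (Finset.univ : Finset (Fin d))) (p := fun i => 0 < β i)
        simp only [Finset.card_univ, Fintype.card_fin] at this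
        rw [nposs]
        omega
      have hJ := Jbound hσpos hd1 ha.le hQ β hm
      rw [← hZdef] at hJ
      have hkey : (C * ∏ i, Real.sign (β i)) *
            (∫ y : Fin d → ℝ, Ffun a d (∑ i, hfun (y i)) * ∏ i, phi σ (β i) (y i))
          - C * a * (-1)^d * Z^d
          = (C * ∏ i, Real.sign (β i)) *
            ((∫ y : Fin d → ℝ, Ffun a d (∑ i, hfun (y i)) * ∏ i, phi σ (β i) (y i))
              - a * (-1)^(nposs β) * Z^d) := by
        rw [mul_sub]
        congr 1
        rw [hχ]
        have hpow : ((-1:ℝ)^(d - nposs β)) * (-1)^(nposs β) = (-1)^d := by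
          rw [← pow_add, Nat.sub_add_cancel (nposs_le β)]
        calc C * a * (-1:ℝ)^d * Z^d = C * (((-1:ℝ)^(d - nposs β) * (-1)^(nposs β))
              * (a * Z^d)) := by rw [hpow]; ring
          _ = C * (-1:ℝ)^(d - nposs β) * (a * (-1:ℝ)^(nposs β) * Z^d) := by ring
      rw [hkey, abs_mul, abs_mul]
      have habsχ : |(∏ i, Real.sign (β i))| = 1 := by
        rw [hχ, abs_pow, abs_neg, abs_one, one_pow]
      rw [habsχ, mul_one, abs_of_pos hCpos]
      exact mul_le_mul_of_nonneg_left hJ hCpos.le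
    -- summation
    set S := ∑ β ∈ BB, (C * ∏ i, Real.sign (β i)) *
        ∫ y : Fin d → ℝ, Ffun a d (∑ i, hfun (y i)) * ∏ i, phi σ (β i) (y i) with hS_def
    have hsub : S - (4:ℝ)^d * (C * a * (-1)^d * Z^d)
        = ∑ β ∈ BB, ((C * ∏ i, Real.sign (β i)) *
            (∫ y : Fin d → ℝ, Ffun a d (∑ i, hfun (y i)) * ∏ i, phi σ (β i) (y i))
          - C * a * (-1)^d * Z^d) := by
      rw [Finset.sum_sub_distrib, Finset.sum_const, hcard, nsmul_eq_mul]
      push_cast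
      ring
    have herr : |S - (4:ℝ)^d * (C * a * (-1)^d * Z^d)| ≤ (4:ℝ)^d * (C * (a/4 * Z^d)) := by
      rw [hsub]
      calc |∑ β ∈ BB, _| ≤ ∑ β ∈ BB, |(C * ∏ i, Real.sign (β i)) *
            (∫ y : Fin d → ℝ, Ffun a d (∑ i, hfun (y i)) * ∏ i, phi σ (β i) (y i))
          - C * a * (-1)^d * Z^d| := Finset.abs_sum_le_sum_abs _ _
        _ ≤ ∑ _β ∈ BB, C * (a/4 * Z^d) := Finset.sum_le_sum hterm
        _ = (4:ℝ)^d * (C * (a/4 * Z^d)) := by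
            rw [Finset.sum_const, hcard, nsmul_eq_mul]
            push_cast
            ring
    have h4Z : (4*Z)^d = 4^d * Z^d := mul_pow 4 Z d
    have hCZ : C * Z^d * 4^d = 2 := by
      rw [hC_def, h4Z]
      have hZd : Z^d ≠ 0 := by positivity
      have h4d : (4:ℝ)^d ≠ 0 := by positivity
      field_simp
    have hmain : |(4:ℝ)^d * (C * a * (-1)^d * Z^d)| = 2*a := by
      rw [show (4:ℝ)^d * (C * a * (-1)^d * Z^d)
          = ((-1:ℝ)^d) * ((4:ℝ)^d * (C * a * Z^d)) by ring]
      rw [abs_mul, abs_pow, abs_neg, abs_one, one_pow, one_mul,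
        abs_of_pos (show (0:ℝ) < (4:ℝ)^d * (C * a * Z^d) by positivity)]
      calc (4:ℝ)^d * (C * a * Z^d) = (C * Z^d * 4^d) * a := by ring
        _ = 2*a := by rw [hCZ]
    have herr2 : (4:ℝ)^d * (C * (a/4 * Z^d)) = a/2 := by
      calc (4:ℝ)^d * (C * (a/4 * Z^d)) = (C * Z^d * 4^d) * (a/4) := by ring
        _ = a/2 := by rw [hCZ]; ring
    have hlow : 3*a/2 ≤ |S| := by
      have h1 : |(4:ℝ)^d * (C * a * (-1)^d * Z^d)| - |S - (4:ℝ)^d * (C * a * (-1)^d * Z^d)|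
          ≤ |S| := by
        have h2 : |(4:ℝ)^d * (C * a * (-1)^d * Z^d)|
            ≤ |S| + |S - (4:ℝ)^d * (C * a * (-1)^d * Z^d)| := by
          calc |(4:ℝ)^d * (C * a * (-1)^d * Z^d)|
              = |S - (S - (4:ℝ)^d * (C * a * (-1)^d * Z^d))| := by ring_nf
            _ ≤ |S| + |S - (4:ℝ)^d * (C * a * (-1)^d * Z^d)| := by
                rw [sub_eq_add_neg]
                exact (abs_add_le _ _).trans (by rw [abs_neg])
        linarith
      rw [hmain] at h1
      have := herr.trans_eq herr2
      linarith
    rw [htrans]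
    linarith [hlow, ha]

end
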